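/- Let X be a finite-dimensional real Banach space, A ⊆ X bounded with d(0,A) > 0, I a finite index set, and {xᵢ : i ∈ I} ⊆ S_X. If for every selection φ of the subdifferential mapping (φ(xᵢ) ∈ J(xᵢ) for each i) one has sup_{i∈I} φ(xᵢ)(x) > 0 for every x in the closure of A, then there exist yᵢ ∈ ℝ⁺xᵢ and radii 0 < rᵢ ≤ ‖yᵢ‖ such that A ⊆ ⋃_{i∈I} B(yᵢ, rᵢ). -/

import Mathlib

open Metric Filter Set Topology

lemma lemA_stmt13 {X : Type*} [NormedAddCommGroup X] [NormedSpace ℝ X]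
    [FiniteDimensional ℝ X]
    (x a : X) (hx : ‖x‖ = 1) (h : ∀ c : ℝ, 0 < c → c ≤ ‖c • x - a‖) :
    ∃ f : X →L[ℝ] ℝ, ‖f‖ = 1 ∧ f x = 1 ∧ f a ≤ 0 := by
  have hne : ∀ n : ℕ, ((n : ℝ) + 1) • x - a ≠ 0 := by
    intro n hz
    have h1 := h ((n : ℝ) + 1) (by positivity)
    rw [hz, norm_zero] at h1
    linarith [Nat.cast_nonneg (α := ℝ) n]
  choose u hu1 hu2 using fun n : ℕ =>
    exists_dual_vector ℝ (((n : ℝ) + 1) • x - a) (norm_ne_zero_iff.mpr (hne n))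
  have hux_le : ∀ n : ℕ, u n x ≤ 1 := by
    intro n
    calc u n x ≤ ‖u n x‖ := le_abs_self _
    _ ≤ ‖u n‖ * ‖x‖ := (u n).le_opNorm x
    _ = 1 := by rw [hu1 n, hx, one_mul]
  have hua : ∀ n : ℕ, u n a ≤ 0 := by
    intro n
    have h1 : u n (((n : ℝ) + 1) • x - a) = ‖((n : ℝ) + 1) • x - a‖ := hu2 n
    have h2 : ((n : ℝ) + 1) ≤ ‖((n : ℝ) + 1) • x - a‖ := h _ (by positivity)
    have h3 : u n a = ((n : ℝ) + 1) * u n x - ‖((n : ℝ) + 1) • x - a‖ := by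
      rw [← h1]; simp [map_sub, map_smul]
    have h4 : ((n : ℝ) + 1) * u n x ≤ (n : ℝ) + 1 := by
      nlinarith [hux_le n, Nat.cast_nonneg (α := ℝ) n]
    linarith
  have hux_ge : ∀ n : ℕ, 1 - ‖a‖ / ((n : ℝ) + 1) ≤ u n x := by
    intro n
    have h1 : u n (((n : ℝ) + 1) • x - a) = ‖((n : ℝ) + 1) • x - a‖ := hu2 n
    have h2 : ((n : ℝ) + 1) ≤ ‖((n : ℝ) + 1) • x - a‖ := h _ (by positivity)
    have h5 : -‖a‖ ≤ u n a := by
      have := (u n).le_opNorm a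
      have h6 : |u n a| ≤ ‖a‖ := by rw [← Real.norm_eq_abs]; calc ‖u n a‖ ≤ ‖u n‖ * ‖a‖ := (u n).le_opNorm a
                                                                 _ = ‖a‖ := by rw [hu1 n, one_mul]
      linarith [neg_abs_le (u n a)]
    have h3 : ((n : ℝ) + 1) * u n x = ‖((n : ℝ) + 1) • x - a‖ + u n a := by
      rw [← h1]; simp [map_sub, map_smul]
    have hpos : (0 : ℝ) < (n : ℝ) + 1 := by positivity
    rw [sub_le_iff_le_add, ← sub_le_iff_le_add', le_div_iff₀ hpos]
    nlinarith
  obtain ⟨f, hf_mem, φ, hφ, hconv⟩ :=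
    (isCompact_sphere (0 : X →L[ℝ] ℝ) 1).tendsto_subseq
      (fun n => mem_sphere_zero_iff_norm.mpr (hu1 n))
  have heval : ∀ v : X, Tendsto (fun n => u (φ n) v) atTop (𝓝 (f v)) := by
    intro v
    exact ((ContinuousLinearMap.apply ℝ ℝ v).continuous.tendsto f).comp hconv
  have hfa : f a ≤ 0 := le_of_tendsto (heval a) (Eventually.of_forall fun n => hua _)
  have hfx_le : f x ≤ 1 := le_of_tendsto (heval x) (Eventually.of_forall fun n => hux_le _)
  have hlim : Tendsto (fun n : ℕ => 1 - ‖a‖ / ((φ n : ℝ) + 1)) atTop (𝓝 1) := by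
    have h1 : Tendsto (fun n : ℕ => ((φ n : ℝ) + 1)) atTop atTop := by
      apply tendsto_atTop_add_const_right
      exact tendsto_natCast_atTop_atTop.comp hφ.tendsto_atTop
    have h2 : Tendsto (fun n : ℕ => ‖a‖ / ((φ n : ℝ) + 1)) atTop (𝓝 0) :=
      Tendsto.div_atTop tendsto_const_nhds h1
    simpa using (tendsto_const_nhds (x := (1:ℝ))).sub h2
  have hfx_ge : 1 ≤ f x :=
    le_of_tendsto_of_tendsto' hlim (heval x) (fun n => hux_ge (φ n))
  exact ⟨f, mem_sphere_zero_iff_norm.mp hf_mem, le_antisymm hfx_le hfx_ge, hfa⟩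

/-- In a finite-dimensional space, if every selection of the
subdifferential mapping positively separates the closure of a bounded set A with
d(0,A) > 0, then A has a ball-covering by origin-avoiding balls centered on the
positive rays of the xᵢ. -/
theorem stmt13 {X : Type*} [NormedAddCommGroup X] [NormedSpace ℝ X]
    [FiniteDimensional ℝ X]
    (A : Set X) (hAb : Bornology.IsBounded A)
    (hd : ∃ δ : ℝ, 0 < δ ∧ ∀ a ∈ A, δ ≤ ‖a‖)
    (m : ℕ) (x : Fin m → X) (hx : ∀ i, ‖x i‖ = 1)
    (hsep : ∀ φ : Fin m → (X →L[ℝ] ℝ),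
      (∀ i, ‖φ i‖ = 1 ∧ φ i (x i) = ‖x i‖) → ∀ z ∈ closure A, ∃ i, 0 < φ i z) :
    ∃ (y : Fin m → X) (r : Fin m → ℝ),
      (∀ i, (∃ l : ℝ, 0 < l ∧ y i = l • x i) ∧ 0 < r i ∧ r i ≤ ‖y i‖) ∧
      A ⊆ ⋃ i, ball (y i) (r i) := by
  classical
  -- Step 1: every point of closure A lies in some ball B(c • x i, c)
  have step1 : ∀ a ∈ closure A, ∃ i : Fin m, ∃ c : ℝ, 0 < c ∧ a ∈ ball (c • x i) c := by
    intro a ha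
    by_contra hcon
    push_neg at hcon
    have hall : ∀ i, ∃ f : X →L[ℝ] ℝ, ‖f‖ = 1 ∧ f (x i) = 1 ∧ f a ≤ 0 := by
      intro i
      apply lemA_stmt13 (x i) a (hx i)
      intro c hc
      have h1 := hcon i c hc
      rw [mem_ball, dist_eq_norm, not_lt] at h1
      rwa [norm_sub_rev] at h1
    choose f hf1 hf2 hf3 using hall
    obtain ⟨i, hi⟩ := hsep f (fun i => ⟨hf1 i, by rw [hx i]; exact hf2 i⟩) a ha
    exact absurd hi (not_lt.mpr (hf3 i))
  -- m = 0 case: closure A is empty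
  rcases Nat.eq_zero_or_pos m with hm | hm
  · subst hm
    refine ⟨x, fun _ => 1, fun i => i.elim0, fun a ha => ?_⟩
    obtain ⟨i, -⟩ := step1 a (subset_closure ha)
    exact i.elim0
  haveI : NeZero m := ⟨hm.ne'⟩
  -- Step 2: compactness
  have hcomp : IsCompact (closure A) := hAb.isCompact_closure
  choose! idx lam hlam hball using step1
  obtain ⟨t, ht_sub, ht_cover⟩ := hcomp.elim_nhds_subcover
    (fun a => ball (lam a • x (idx a)) (lam a))
    (fun a ha => (isOpen_ball.mem_nhds (hball a ha) : _))
  set Λ : Fin m → ℝ := fun j => 1 + ∑ b ∈ t, (if idx b = j then lam b else 0) with hΛ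
  have hterm_nonneg : ∀ j, ∀ b ∈ t, 0 ≤ (if idx b = j then lam b else 0) := by
    intro j b hb
    split
    · exact (hlam b (ht_sub b hb)).le
    · exact le_refl _
  have hΛpos : ∀ j, 0 < Λ j := by
    intro j
    have : 0 ≤ ∑ b ∈ t, (if idx b = j then lam b else 0) :=
      Finset.sum_nonneg (hterm_nonneg j)
    simp only [hΛ]; linarith
  refine ⟨fun j => Λ j • x j, Λ, fun j => ⟨⟨Λ j, hΛpos j, rfl⟩, hΛpos j, ?_⟩, ?_⟩
  · rw [norm_smul, hx j, mul_one, Real.norm_eq_abs, abs_of_pos (hΛpos j)]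
  · intro a ha
    obtain ⟨b, hb, hab⟩ := Set.mem_iUnion₂.mp (ht_cover (subset_closure ha))
    set j := idx b
    have hle : lam b ≤ Λ j := by
      have h1 : lam b ≤ ∑ c ∈ t, (if idx c = j then lam c else 0) := by
        have := Finset.single_le_sum (hterm_nonneg j) hb
        simpa [j] using this
      simp only [hΛ]; linarith
    refine Set.mem_iUnion.mpr ⟨j, ?_⟩
    have h1 : dist a (lam b • x j) < lam b := mem_ball.mp hab
    have h2 : dist (lam b • x j) (Λ j • x j) = Λ j - lam b := by
      rw [dist_eq_norm, ← sub_smul, norm_smul, hx j, mul_one, Real.norm_eq_abs,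
        abs_of_nonpos (by linarith)]
      ring
    rw [mem_ball]
    calc dist a (Λ j • x j) ≤ dist a (lam b • x j) + dist (lam b • x j) (Λ j • x j) :=
          dist_triangle _ _ _
      _ < lam b + (Λ j - lam b) := by rw [h2]; linarith
      _ = Λ j := by ring
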